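/- For a left R-module M the following are equivalent: (1) every injective module belongs to the flat-precover completing domain of M; (2) the injective envelope E(M) belongs to the flat-precover completing domain of M; (3) M embeds in a flat module; (4) for every injective module E and every submodule N of E with Ext¹(M,N) = 0, the quotient E/N belongs to the flat-precover completing domain of M. -/

import Mathlib

open CategoryTheory

universe u

variable {R : Type u} [Ring R]

/-- The submodule of relations defining the balanced tensor product `W ⊗_R M` of a
right `R`-module `W` and a left `R`-module `M` as a quotient of `W ⊗_ℤ M`. -/
abbrev tensorRel (W : Type u) [AddCommGroup W] [Module Rᵐᵒᵖ W]
    (M : Type u) [AddCommGroup M] [Module R M] : Submodule ℤ (TensorProduct ℤ W M) :=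
  Submodule.span ℤ
    {x | ∃ (w : W) (r : R) (m : M), x = (MulOpposite.op r • w) ⊗ₜ[ℤ] m - w ⊗ₜ[ℤ] (r • m)}

/-- The balanced tensor product `W ⊗_R M` over the (possibly noncommutative) ring `R`. -/
abbrev RTensor (W : Type u) [AddCommGroup W] [Module Rᵐᵒᵖ W]
    (M : Type u) [AddCommGroup M] [Module R M] : Type u :=
  TensorProduct ℤ W M ⧸ tensorRel (R := R) W M

/-- The map `W ⊗_R M → K ⊗_R M` induced by a morphism `i : W → K` of right
`R`-modules. -/
noncomputable def tensorMap {W K : Type u} [AddCommGroup W] [Module Rᵐᵒᵖ W]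
    [AddCommGroup K] [Module Rᵐᵒᵖ K] (i : W →ₗ[Rᵐᵒᵖ] K)
    (M : Type u) [AddCommGroup M] [Module R M] :
    RTensor (R := R) W M →ₗ[ℤ] RTensor (R := R) K M :=
  Submodule.mapQ _ _ (LinearMap.rTensor M i.toAddMonoidHom.toIntLinearMap) (by
    refine Submodule.span_le.2 ?_
    rintro x ⟨w, r, m, rfl⟩
    refine Submodule.mem_comap.2 (Submodule.subset_span ?_)
    refine ⟨i w, r, m, ?_⟩
    have h := map_sub (LinearMap.rTensor M i.toAddMonoidHom.toIntLinearMap)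
      ((MulOpposite.op r • w) ⊗ₜ[ℤ] m) (w ⊗ₜ[ℤ] (r • m))
    simp only [LinearMap.rTensor_tmul, AddMonoidHom.coe_toIntLinearMap,
      LinearMap.toAddMonoidHom_coe, map_smul] at h
    exact h)

/-- `M` is a flat left `R`-module: tensoring with `M` preserves injectivity of
morphisms of right `R`-modules. -/
def IsFlat (M : Type u) [AddCommGroup M] [Module R M] : Prop :=
  ∀ (W K : Type u) [AddCommGroup W] [Module Rᵐᵒᵖ W] [AddCommGroup K] [Module Rᵐᵒᵖ K]
    (i : W →ₗ[Rᵐᵒᵖ] K), Function.Injective i → Function.Injective (tensorMap (R := R) i M)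

/-- `N` belongs to the flat-precover completing domain `𝔉⁻¹(M)` of `M`:
every morphism `M ⟶ N` factors through a flat module. -/
def FlatDom (M N : ModuleCat.{u} R) : Prop :=
  ∀ f : M ⟶ N, ∃ (F : ModuleCat.{u} R) (h : M ⟶ F) (k : F ⟶ N),
    IsFlat (R := R) ↥F ∧ h ≫ k = f

/-- `Ext¹(A,B) = 0`, expressed by the splitting of every short exact sequence
`0 → B → E → A → 0`. -/
def Ext1Vanish (A B : ModuleCat.{u} R) : Prop :=
  ∀ (E : ModuleCat.{u} R) (i : B ⟶ E) (p : E ⟶ A),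
    Function.Injective i → Function.Surjective p → Function.Exact ⇑i ⇑p →
      ∃ r : E ⟶ B, i ≫ r = 𝟙 B

section Aux
variable {Q : Type u} [AddCommGroup Q] [Module R Q]

/-- `N` is essential in `H` (both submodules of `Q`). -/
def EssIn (N H : Submodule R Q) : Prop := ∀ K ≤ H, K ≠ ⊥ → K ⊓ N ≠ ⊥

lemma essIn_self (N : Submodule R Q) : EssIn N N := by
  intro K hK hKne
  rwa [inf_eq_left.2 hK]

lemma exists_maximal_ess (N : Submodule R Q) :
    ∃ H, N ≤ H ∧ Maximal (fun H => N ≤ H ∧ EssIn N H) H := by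
  have hzorn : ∀ c ⊆ {H : Submodule R Q | N ≤ H ∧ EssIn N H},
      IsChain (· ≤ ·) c → ∀ y ∈ c, ∃ ub ∈ {H | N ≤ H ∧ EssIn N H}, ∀ z ∈ c, z ≤ ub := by
    intro c hcs hchain H₀ hH₀
    refine ⟨sSup c, ⟨le_trans (hcs hH₀).1 (le_sSup hH₀), ?_⟩, fun z hz => le_sSup hz⟩
    intro K hK hKne
    obtain ⟨x, hxK, hx0⟩ := Submodule.ne_bot_iff K |>.1 hKne
    obtain ⟨H₁, hH₁c, hxH₁⟩ := (Submodule.mem_sSup_of_directed ⟨H₀, hH₀⟩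
      (hchain.directedOn)).1 (hK hxK)
    have h1 : Submodule.span R {x} ≤ H₁ := (Submodule.span_singleton_le_iff_mem x H₁).2 hxH₁
    have h2 : Submodule.span R {x} ≠ ⊥ := by
      simpa [Submodule.span_singleton_eq_bot] using hx0
    have := (hcs hH₁c).2 _ h1 h2
    obtain ⟨y, hy, hy0⟩ := Submodule.ne_bot_iff _ |>.1 this
    refine Submodule.ne_bot_iff _ |>.2 ⟨y, ⟨?_, hy.2⟩, hy0⟩
    exact (Submodule.span_singleton_le_iff_mem x K).2 hxK hy.1
  obtain ⟨H, hle, hmax⟩ := zorn_le_nonempty₀ {H | N ≤ H ∧ EssIn N H} hzorn N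
    ⟨le_rfl, essIn_self N⟩
  exact ⟨H, hmax.prop.1, hmax⟩

lemma exists_maximal_disjoint (H : Submodule R Q) :
    ∃ K, Maximal (fun K => K ⊓ H = ⊥) K := by
  have hzorn : ∀ c ⊆ {K : Submodule R Q | K ⊓ H = ⊥},
      IsChain (· ≤ ·) c → ∀ y ∈ c, ∃ ub ∈ {K | K ⊓ H = ⊥}, ∀ z ∈ c, z ≤ ub := by
    intro c hcs hchain K₀ hK₀
    refine ⟨sSup c, ?_, fun z hz => le_sSup hz⟩
    rw [Set.mem_setOf_eq, eq_bot_iff]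
    intro x hx
    obtain ⟨K₁, hK₁c, hxK₁⟩ := (Submodule.mem_sSup_of_directed ⟨K₀, hK₀⟩
      (hchain.directedOn)).1 hx.1
    have : x ∈ K₁ ⊓ H := ⟨hxK₁, hx.2⟩
    rwa [hcs hK₁c] at this
  obtain ⟨K, -, hmax⟩ := zorn_le_nonempty₀ {K | K ⊓ H = ⊥} hzorn ⊥ (by simp)
  exact ⟨K, hmax⟩

/-- image of `N` in `Q ⧸ K` is essential. -/
lemma quot_essential {N H K : Submodule R Q} (hNH : N ≤ H) (hE : EssIn N H)
    (hmax : Maximal (fun K => K ⊓ H = ⊥) K) :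
    ∀ L : Submodule R (Q ⧸ K), L ≠ ⊥ → L ⊓ N.map K.mkQ ≠ ⊥ := by
  intro L hL
  obtain ⟨x, hxL, hx0⟩ := Submodule.ne_bot_iff L |>.1 hL
  obtain ⟨q, rfl⟩ := K.mkQ_surjective x
  set L' := L.comap K.mkQ with hL'
  have hKL' : K ≤ L' := fun k hk => by
    show K.mkQ k ∈ L
    simp [Submodule.mkQ_apply, (Submodule.Quotient.mk_eq_zero K).2 hk]
  have hqL' : q ∈ L' := hxL
  have hqK : q ∉ K := fun h => hx0 ((Submodule.Quotient.mk_eq_zero K).2 h)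
  have hL'H : L' ⊓ H ≠ ⊥ := fun h => hqK (hmax.2 h hKL' hqL')
  obtain ⟨y, hy, hy0⟩ := Submodule.ne_bot_iff _ |>.1 hL'H
  -- y ∈ L' ⊓ H, y ≠ 0; apply essentiality of N in H to span {y}
  have h1 : Submodule.span R {y} ≤ H := (Submodule.span_singleton_le_iff_mem y H).2 hy.2
  have h2 : Submodule.span R {y} ≠ ⊥ := by
    simpa [Submodule.span_singleton_eq_bot] using hy0
  obtain ⟨z, hz, hz0⟩ := Submodule.ne_bot_iff _ |>.1 (hE _ h1 h2)
  have hzL' : z ∈ L' := (Submodule.span_singleton_le_iff_mem y L' |>.2 hy.1) hz.1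
  have hzH : z ∈ H := h1 hz.1
  refine Submodule.ne_bot_iff _ |>.2 ⟨K.mkQ z, ⟨hzL', Submodule.mem_map_of_mem hz.2⟩, ?_⟩
  intro h0
  have hzK : z ∈ K := (Submodule.Quotient.mk_eq_zero K).1 h0
  have : z ∈ K ⊓ H := ⟨hzK, hzH⟩
  rw [hmax.prop] at this
  exact hz0 this
end Aux

theorem exists_injective_essential (M : ModuleCat.{u} R) :
    ∃ (E : ModuleCat.{u} R) (i : M ⟶ E), Injective E ∧ Function.Injective i ∧
      ∀ K : Submodule R ↥E, K ≠ ⊥ → K ⊓ LinearMap.range i.hom ≠ ⊥ := by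
  set Q := Injective.under M with hQ
  set ι : M ⟶ Q := Injective.ι M with hι
  have hιinj : Function.Injective ι := by
    rw [← ModuleCat.mono_iff_injective]; infer_instance
  set N : Submodule R ↥Q := LinearMap.range ι.hom with hN
  obtain ⟨H, hNH, hHmax⟩ := exists_maximal_ess (R := R) N
  have hHE : EssIn N H := hHmax.prop.2
  obtain ⟨K, hKmax⟩ := exists_maximal_disjoint (R := R) H
  have hKH : K ⊓ H = ⊥ := hKmax.prop
  let m : ModuleCat.of R ↥H ⟶ ModuleCat.of R (↥Q ⧸ K) := ModuleCat.ofHom (K.mkQ.comp H.subtype)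
  have hminj' : ∀ a b : ↥H, m a = m b → a = b := by
    intro a b hab
    have h1 : (a : ↥Q) - (b : ↥Q) ∈ K := (Submodule.Quotient.eq K).1 hab
    have h2 : (a : ↥Q) - (b : ↥Q) ∈ K ⊓ H := ⟨h1, H.sub_mem a.2 b.2⟩
    rw [hKH] at h2
    exact Subtype.ext (sub_eq_zero.1 h2)
  have hminj : Function.Injective m := fun a b hab => hminj' a b hab
  haveI : Mono m := (ModuleCat.mono_iff_injective m).mpr hminj
  let f₀ : ModuleCat.of R ↥H ⟶ Q := ModuleCat.ofHom H.subtype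
  let φ : ModuleCat.of R (↥Q ⧸ K) ⟶ Q := Injective.factorThru f₀ m
  have hφm : ∀ h : ↥H, φ (K.mkQ ↑h) = ↑h := fun h =>
    ConcreteCategory.congr_hom (Injective.comp_factorThru f₀ m) h
  have hφinj : Function.Injective φ := by
    rw [← LinearMap.ker_eq_bot]
    by_contra hker
    obtain ⟨w, hw, hw0⟩ := (Submodule.ne_bot_iff _).1
      (quot_essential hNH hHE hKmax _ hker)
    obtain ⟨n, hnN, rfl⟩ := hw.2
    have hnH : n ∈ H := hNH hnN
    have hthis : φ (K.mkQ n) = n := hφm ⟨n, hnH⟩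
    have hn0 : n = 0 := by rw [← hthis]; exact LinearMap.mem_ker.1 hw.1
    exact hw0 (by rw [hn0]; simp)
  have hrange : LinearMap.range φ.hom = H := by
    refine le_antisymm ?_ ?_
    · refine hHmax.2 ⟨?_, ?_⟩ ?_
      · -- N ≤ range φ
        intro n hn
        exact ⟨K.mkQ n, hφm ⟨n, hNH hn⟩⟩
      · -- EssIn N (range φ)
        intro K' hK' hK'ne
        obtain ⟨x, hxK', hx0⟩ := (Submodule.ne_bot_iff _).1 hK'ne
        obtain ⟨z, rfl⟩ := hK' hxK'
        have hz0 : Submodule.span R {z} ≠ ⊥ := by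
          simpa [Submodule.span_singleton_eq_bot] using fun h => hx0 (by rw [h]; simp)
        obtain ⟨w, hw, hw0⟩ := (Submodule.ne_bot_iff _).1
          (quot_essential hNH hHE hKmax _ hz0)
        obtain ⟨a, rfl⟩ := Submodule.mem_span_singleton.1 hw.1
        obtain ⟨n, hnN, hmk⟩ := hw.2
        have hφw : φ (a • z) = n := by rw [← hmk]; exact hφm ⟨n, hNH hnN⟩
        refine (Submodule.ne_bot_iff _).2 ⟨n, ⟨?_, hnN⟩, ?_⟩
        · rw [← hφw]; rw [map_smul]; exact K'.smul_mem a hxK'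
        · intro h0; exact hw0 (hφinj (by rw [hφw, h0, map_zero]))
      · -- H ≤ range φ
        intro h hh
        exact ⟨K.mkQ h, hφm ⟨h, hh⟩⟩
    · intro h hh
      exact ⟨K.mkQ h, hφm ⟨h, hh⟩⟩
  let ρ : (↥Q) →ₗ[R] ↥H := LinearMap.codRestrict H (φ.hom.comp K.mkQ)
    (fun q => by rw [← hrange]; exact ⟨K.mkQ q, rfl⟩)
  have hρ : ∀ h : ↥H, ρ ↑h = h := fun h => Subtype.ext (hφm h)
  let ρc : Q ⟶ ModuleCat.of R ↥H := ModuleCat.ofHom ρ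
  let subc : ModuleCat.of R ↥H ⟶ Q := ModuleCat.ofHom H.subtype
  have hcomp : subc ≫ ρc = 𝟙 _ := by
    apply ModuleCat.hom_ext
    apply LinearMap.ext
    intro h
    exact hρ h
  have hInjH : Injective (ModuleCat.of R ↥H) := by
    constructor
    intro X Y f g hg
    refine ⟨(Injective.factorThru (f ≫ subc) g) ≫ ρc, ?_⟩
    rw [← Category.assoc, Injective.comp_factorThru, Category.assoc, hcomp, Category.comp_id]
  refine ⟨ModuleCat.of R ↥H, ModuleCat.ofHom (LinearMap.codRestrict H ι.hom (fun x => hNH ⟨x, rfl⟩)),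
    hInjH, ?_, ?_⟩
  · intro a b hab
    exact hιinj (congrArg Subtype.val hab)
  · intro K₀ hK₀ne
    obtain ⟨x, hxK₀, hx0⟩ := (Submodule.ne_bot_iff _).1 hK₀ne
    have h1 : K₀.map H.subtype ≤ H := by
      rintro - ⟨u, -, rfl⟩; exact u.2
    have h2 : K₀.map H.subtype ≠ ⊥ := by
      refine (Submodule.ne_bot_iff _).2 ⟨H.subtype x, Submodule.mem_map_of_mem hxK₀, ?_⟩
      exact fun h => hx0 (Subtype.ext h)
    obtain ⟨y, hy, hy0⟩ := (Submodule.ne_bot_iff _).1 (hHE _ h1 h2)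
    obtain ⟨u, huK₀, hu⟩ := hy.1
    obtain ⟨mm, hmm⟩ := hy.2
    refine (Submodule.ne_bot_iff _).2 ⟨u, ⟨huK₀, ⟨mm, ?_⟩⟩, ?_⟩
    · refine Subtype.ext ?_
      show ι mm = H.subtype u
      rw [hmm, ← hu]
    · exact fun h => hy0 (by rw [← hu, h]; rfl)

theorem stmt_19 (M : ModuleCat.{u} R) :
    [∀ E : ModuleCat.{u} R, Injective E → FlatDom M E,
      ∀ (E : ModuleCat.{u} R) (i : M ⟶ E), Injective E → Function.Injective i →
        (∀ K : Submodule R ↥E, K ≠ ⊥ → K ⊓ LinearMap.range i.hom ≠ ⊥) → FlatDom M E,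
      ∃ (F : ModuleCat.{u} R) (i : M ⟶ F), IsFlat (R := R) ↥F ∧ Function.Injective i,
      ∀ E : ModuleCat.{u} R, Injective E → ∀ K : Submodule R ↥E,
        Ext1Vanish M (ModuleCat.of R ↥K) →
          FlatDom M (ModuleCat.of R (↥E ⧸ K))].TFAE := by
  tfae_have 1 → 2 := by
    intro h1 E i hE _ _
    exact h1 E hE
  tfae_have 2 → 3 := by
    intro h2
    obtain ⟨E, i, hE, hinj, hess⟩ := exists_injective_essential M
    obtain ⟨F, h, k, hF, hcomp⟩ := h2 E i hE hinj hess i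
    have hpt : ∀ x : ↥M, i x = k (h x) := fun x => by rw [← hcomp]; rfl
    refine ⟨F, h, hF, fun a b hab => hinj ?_⟩
    rw [hpt a, hpt b, hab]
  tfae_have 3 → 4 := by
    intro h3 E hE K hExt
    obtain ⟨F, i₀, hF, hi₀⟩ := h3
    haveI : Mono i₀ := (ModuleCat.mono_iff_injective i₀).mpr hi₀
    intro f
    let f' : ↥M →ₗ[R] (↥E ⧸ K) := f.hom
    let g : (↥E × ↥M) →ₗ[R] (↥E ⧸ K) :=
      K.mkQ.comp (LinearMap.fst R ↥E ↥M) - f'.comp (LinearMap.snd R ↥E ↥M)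
    set X := LinearMap.ker g with hX
    have hmemX : ∀ v : ↥E × ↥M, v ∈ X ↔ K.mkQ v.1 = f' v.2 := by
      intro v
      rw [LinearMap.mem_ker]
      show K.mkQ v.1 - f' v.2 = 0 ↔ _
      rw [sub_eq_zero]
    let jK0 : ↥K →ₗ[R] ↥E × ↥M := K.subtype.prod 0
    have hjmem : ∀ kk : ↥K, jK0 kk ∈ X := by
      intro kk
      rw [hmemX]
      show K.mkQ ↑kk = f' 0
      rw [map_zero, Submodule.mkQ_apply, Submodule.Quotient.mk_eq_zero]
      exact kk.2
    let jK : ↥K →ₗ[R] ↥X := LinearMap.codRestrict X jK0 hjmem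
    let p : ↥X →ₗ[R] ↥M := (LinearMap.snd R ↥E ↥M).comp X.subtype
    have hpsurj : Function.Surjective p := by
      intro mm
      obtain ⟨e, he⟩ := K.mkQ_surjective (f' mm)
      exact ⟨⟨(e, mm), (hmemX (e, mm)).2 he⟩, rfl⟩
    have hjinj : Function.Injective jK := by
      intro a b hab
      exact Subtype.ext (congrArg (fun z => (Subtype.val z).1) hab)
    have hker : LinearMap.ker p = LinearMap.range jK := by
      ext x
      rw [LinearMap.mem_ker]
      constructor
      · intro hx
        have hx2 : (x : ↥E × ↥M).2 = 0 := hx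
        have hx1 : K.mkQ (x : ↥E × ↥M).1 = 0 := by
          rw [(hmemX _).1 x.2, hx2, map_zero]
        refine ⟨⟨(x : ↥E × ↥M).1, ?_⟩, ?_⟩
        · rw [Submodule.mkQ_apply, Submodule.Quotient.mk_eq_zero] at hx1
          exact hx1
        · exact Subtype.ext (Prod.ext rfl hx2.symm)
      · rintro ⟨kk, rfl⟩
        rfl
    have hexact : Function.Exact ⇑jK ⇑p := LinearMap.exact_iff.2 hker
    obtain ⟨r, hr⟩ := hExt (ModuleCat.of R ↥X) (ModuleCat.ofHom jK) (ModuleCat.ofHom p) hjinj hpsurj hexact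
    have hrj : ∀ kk : ↥K, r (jK kk) = kk := fun kk => ConcreteCategory.congr_hom hr kk
    let q : ↥X →ₗ[R] ↥X := LinearMap.id - LinearMap.comp jK r.hom
    have hqle : LinearMap.ker p ≤ LinearMap.ker q := by
      intro x hx
      rw [hker] at hx
      obtain ⟨kk, rfl⟩ := hx
      rw [LinearMap.mem_ker]
      show jK kk - jK (r (jK kk)) = 0
      rw [hrj kk, sub_self]
    let e := LinearMap.quotKerEquivOfSurjective p hpsurj
    have heq : ∀ x : ↥X, e (Submodule.Quotient.mk x) = p x := fun x => rfl
    let s : ↥M →ₗ[R] ↥X := (Submodule.liftQ (LinearMap.ker p) q hqle).comp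
      (e.symm : ↥M →ₗ[R] (↥X ⧸ LinearMap.ker p))
    have hps : ∀ mm : ↥M, p (s mm) = mm := by
      intro mm
      obtain ⟨x, hx⟩ := hpsurj mm
      have h1 : e.symm mm = Submodule.Quotient.mk x := by
        rw [LinearEquiv.symm_apply_eq, heq, hx]
      have h2 : s mm = q x := by
        show Submodule.liftQ _ q hqle (e.symm mm) = q x
        rw [h1]
        rfl
      rw [h2]
      show p (x - jK (r x)) = mm
      rw [map_sub, hx]
      have h4 : p (jK (r x)) = 0 := rfl
      rw [h4, sub_zero]
    let g' : ↥M →ₗ[R] ↥E := (LinearMap.fst R ↥E ↥M).comp (X.subtype.comp s)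
    have hg' : ∀ mm : ↥M, K.mkQ (g' mm) = f' mm := by
      intro mm
      have hm : K.mkQ ((s mm : ↥E × ↥M).1) = f' ((s mm : ↥E × ↥M).2) := (hmemX _).1 (s mm).2
      have h5 : ((s mm : ↥E × ↥M).2) = mm := hps mm
      rw [h5] at hm
      exact hm
    let g'c : M ⟶ E := ModuleCat.ofHom g'
    let h := Injective.factorThru g'c i₀
    have hh : ∀ mm : ↥M, h (i₀ mm) = g' mm := fun mm =>
      ConcreteCategory.congr_hom (Injective.comp_factorThru g'c i₀) mm
    let mkQc : E ⟶ ModuleCat.of R (↥E ⧸ K) := ModuleCat.ofHom K.mkQ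
    refine ⟨F, i₀, h ≫ mkQc, hF, ?_⟩
    apply ModuleCat.hom_ext
    apply LinearMap.ext
    intro mm
    show K.mkQ (h (i₀ mm)) = f' mm
    rw [hh mm, hg' mm]
  tfae_have 4 → 1 := by
    intro h4 E hE
    have hsub : ∀ y : ↥(⊥ : Submodule R ↥E), y = 0 := fun y =>
      Subtype.ext ((Submodule.mem_bot R).1 y.2)
    haveI : Subsingleton ↑(ModuleCat.of R ↥(⊥ : Submodule R ↥E)) :=
      ⟨fun a b => (hsub a).trans (hsub b).symm⟩
    have hext : Ext1Vanish M (ModuleCat.of R ↥(⊥ : Submodule R ↥E)) := by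
      intro E' i pp hi hp hex
      refine ⟨0, ?_⟩
      apply ModuleCat.hom_ext
      apply LinearMap.ext
      intro x
      exact Subsingleton.elim _ _
    have hfd := h4 E hE ⊥ hext
    intro f
    let φ1 : M ⟶ ModuleCat.of R (↥E ⧸ (⊥ : Submodule R ↥E)) :=
      ModuleCat.ofHom (((⊥ : Submodule R ↥E).mkQ).comp (f.hom : ↥M →ₗ[R] ↥E))
    obtain ⟨F, h, k, hF, hc⟩ := hfd φ1
    let ψ : ModuleCat.of R (↥E ⧸ (⊥ : Submodule R ↥E)) ⟶ E :=
      ModuleCat.ofHom (Submodule.quotEquivOfEqBot (⊥ : Submodule R ↥E) rfl).toLinearMap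
    refine ⟨F, h, k ≫ ψ, hF, ?_⟩
    apply ModuleCat.hom_ext
    apply LinearMap.ext
    intro mm
    show ψ (k (h mm)) = f mm
    have h1 : k (h mm) = φ1 mm := ConcreteCategory.congr_hom hc mm
    rw [h1]
    show (Submodule.quotEquivOfEqBot (⊥ : Submodule R ↥E) rfl)
      (Submodule.Quotient.mk (f mm)) = f mm
    rw [Submodule.quotEquivOfEqBot_apply_mk]
  tfae_finish
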